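/- arXiv:1812.10393 — 5 statements merged into one kernel-verified Lean document; each statement's English description precedes it below -/
import Mathlib

section
/- Let a > 0 and let U₀ : ℂ → ℂ be entire (complex differentiable everywhere). Then the function U(t,z) = e^{zt/2} · e^{t²/(4a)} · U₀(z + t/a) satisfies the heat equation for the generalized complex Dirac operator, namely ∂U/∂t (t,z) = (1/a)·∂U/∂z (t,z) + (z/2)·U(t,z) for all t ∈ ℝ and z ∈ ℂ, together with the initial condition U(0,z) = U₀(z) for all z ∈ ℂ. -/
open Complex

/-- **Heat Cauchy problem for the generalized complex Dirac operator.**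
For `a > 0` and entire `U₀`, the function
`U(t,z) = e^{zt/2} e^{t²/(4a)} U₀(z + t/a)` satisfies
`∂U/∂t = (1/a) ∂U/∂z + (z/2) U` with `U(0,z) = U₀ z`. -/
theorem complex_dirac_heat (a : ℝ) (ha : 0 < a) (U₀ : ℂ → ℂ)
    (hU₀ : Differentiable ℂ U₀)
    (U : ℝ → ℂ → ℂ)
    (hU : ∀ t z, U t z =
      Complex.exp (z * t / 2) * Complex.exp (t ^ 2 / (4 * a)) * U₀ (z + t / a)) :
    (∀ (t : ℝ) (z : ℂ),
        deriv (fun t' : ℝ => U t' z) t =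
          (1 / (a : ℂ)) * deriv (fun z' : ℂ => U t z') z + (z / 2) * U t z) ∧
    (∀ z : ℂ, U 0 z = U₀ z) := by
  have haC : (a : ℂ) ≠ 0 := by
    exact_mod_cast ha.ne'
  constructor
  · intro t z
    set w : ℂ := (t : ℂ)
    -- derivative in t via complex derivative of g
    have h1 : ∀ v : ℂ, HasDerivAt (fun v : ℂ => Complex.exp (z * v / 2))
        (z / 2 * Complex.exp (z * v / 2)) v := by
      intro v
      have := (((hasDerivAt_id v).const_mul z).div_const 2).cexp
      simpa [mul_comm, div_eq_mul_inv, mul_assoc, mul_left_comm] using this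
    have h2 : ∀ v : ℂ, HasDerivAt (fun v : ℂ => Complex.exp (v ^ 2 / (4 * a)))
        (v / (2 * a) * Complex.exp (v ^ 2 / (4 * a))) v := by
      intro v
      have := ((hasDerivAt_pow 2 v).div_const ((4 : ℂ) * a)).cexp
      convert this using 1
      push_cast
      rfl
      norm_num
      ring
    have h3 : ∀ v : ℂ, HasDerivAt (fun v : ℂ => U₀ (z + v / a))
        (deriv U₀ (z + v / a) * (1 / a)) v := by
      intro v
      exact (hU₀ _).hasDerivAt.comp v
        (by simpa using ((hasDerivAt_id v).div_const (a : ℂ)).const_add z)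
    have hg : HasDerivAt (fun v : ℂ =>
          Complex.exp (z * v / 2) * Complex.exp (v ^ 2 / (4 * a)) * U₀ (z + v / a))
        ((z / 2 * Complex.exp (z * w / 2) * Complex.exp (w ^ 2 / (4 * a))
          + Complex.exp (z * w / 2) * (w / (2 * a) * Complex.exp (w ^ 2 / (4 * a))))
            * U₀ (z + w / a)
          + Complex.exp (z * w / 2) * Complex.exp (w ^ 2 / (4 * a))
            * (deriv U₀ (z + w / a) * (1 / a))) w :=
      ((h1 w).mul (h2 w)).mul (h3 w)
    have hF : HasDerivAt (fun t' : ℝ => U t' z)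
        ((z / 2 * Complex.exp (z * w / 2) * Complex.exp (w ^ 2 / (4 * a))
          + Complex.exp (z * w / 2) * (w / (2 * a) * Complex.exp (w ^ 2 / (4 * a))))
            * U₀ (z + w / a)
          + Complex.exp (z * w / 2) * Complex.exp (w ^ 2 / (4 * a))
            * (deriv U₀ (z + w / a) * (1 / a))) t := by
      have := hg.comp_ofReal
      simp only [hU]
      exact this
    -- derivative in z
    have hz1 : HasDerivAt (fun z' : ℂ => Complex.exp (z' * w / 2))
        (w / 2 * Complex.exp (z * w / 2)) z := by
      have := (((hasDerivAt_id z).mul_const w).div_const 2).cexp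
      simpa [mul_comm, div_eq_mul_inv, mul_assoc, mul_left_comm] using this
    have hz3 : HasDerivAt (fun z' : ℂ => U₀ (z' + w / a))
        (deriv U₀ (z + w / a)) z := by
      have := (hU₀ _).hasDerivAt.comp z ((hasDerivAt_id z).add_const ((w : ℂ) / a))
      simpa [Function.comp_def] using this
    have hG : HasDerivAt (fun z' : ℂ =>
          Complex.exp (z' * w / 2) * Complex.exp (w ^ 2 / (4 * a)) * U₀ (z' + w / a))
        ((w / 2 * Complex.exp (z * w / 2)) * Complex.exp (w ^ 2 / (4 * a))
            * U₀ (z + w / a)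
          + Complex.exp (z * w / 2) * Complex.exp (w ^ 2 / (4 * a))
            * deriv U₀ (z + w / a)) z := by
      exact (hz1.mul_const (Complex.exp (w ^ 2 / (4 * a)))).mul hz3
    have hGz : HasDerivAt (fun z' : ℂ => U t z')
        ((w / 2 * Complex.exp (z * w / 2)) * Complex.exp (w ^ 2 / (4 * a))
            * U₀ (z + w / a)
          + Complex.exp (z * w / 2) * Complex.exp (w ^ 2 / (4 * a))
            * deriv U₀ (z + w / a)) z := by
      simp only [hU]; exact hG
    rw [hF.deriv, hGz.deriv, hU t z]
    field_simp
    ring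
  · intro z
    rw [hU]
    simp
end

section
/- Let a > 0 and let u₀ : ℝ → ℂ be differentiable. Then the function u(t,x) = e^{-axt} · e^{-at²/2} · u₀(x + t) satisfies the heat equation for the generalized real Dirac operator, namely ∂u/∂t (t,x) = ∂u/∂x (t,x) − a·x·u(t,x) for all t ∈ ℝ and x ∈ ℝ, together with the initial condition u(0,x) = u₀(x) for all x ∈ ℝ. -/
open Complex

/-- **Heat Cauchy problem for the generalized real Dirac operator.**
For `a > 0` and differentiable `u₀`, the function
`u(t,x) = e^{-axt} e^{-at²/2} u₀(x + t)` satisfies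
`∂u/∂t = ∂u/∂x − a·x·u` with `u(0,x) = u₀ x`. -/
theorem real_dirac_heat (a : ℝ) (ha : 0 < a) (u₀ : ℝ → ℂ)
    (hu₀ : Differentiable ℝ u₀)
    (u : ℝ → ℝ → ℂ)
    (hu : ∀ t x, u t x =
      Complex.exp (-(a * x * t)) * Complex.exp (-(a * t ^ 2 / 2)) * u₀ (x + t)) :
    (∀ (t x : ℝ),
        deriv (fun t' : ℝ => u t' x) t =
          deriv (fun x' : ℝ => u t x') x - (a : ℂ) * (x : ℂ) * u t x) ∧
    (∀ x : ℝ, u 0 x = u₀ x) := by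
  have hd : ∀ y : ℝ, HasDerivAt (fun s : ℝ => (s : ℂ)) 1 y := fun y => by
    exact Complex.ofRealCLM.hasDerivAt (x := y)
  constructor
  · intro t x
    set e1 := Complex.exp (-(↑a * ↑x * ↑t)) with he1
    set e2 := Complex.exp (-(↑a * ↑t ^ 2 / 2)) with he2
    -- t-derivatives
    have h1 : HasDerivAt (fun t' : ℝ => Complex.exp (-((a:ℂ) * x * t')))
        (e1 * (-((a:ℂ) * x))) t := by
      have hi : HasDerivAt (fun t' : ℝ => -((a:ℂ) * x * t')) (-((a:ℂ) * x)) t := by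
        have := ((hd t).const_mul ((a:ℂ) * x)).neg
        simp at this
        exact this
      simpa [he1, mul_comm] using hi.cexp
    have h2 : HasDerivAt (fun t' : ℝ => Complex.exp (-((a:ℂ) * (t':ℂ) ^ 2 / 2)))
        (e2 * (-((a:ℂ) * t))) t := by
      have hi : HasDerivAt (fun t' : ℝ => -((a:ℂ) * (t':ℂ) ^ 2 / 2)) (-((a:ℂ) * t)) t := by
        have hsq : HasDerivAt (fun t' : ℝ => ((t':ℂ)) ^ 2) (2 * (t:ℂ)) t := by
          have := (hd t).mul (hd t)
          convert this using 1
          · rfl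
          · funext s; simp [sq]
          · ring
        have := (hsq.const_mul (a:ℂ)).div_const 2
        have h' := this.neg
        convert h' using 1
        · rfl
        · funext s; simp only [Pi.neg_apply]
        · ring
      simpa [he2, mul_comm] using hi.cexp
    have h3 : HasDerivAt (fun t' : ℝ => u₀ (x + t')) (deriv u₀ (x + t)) t :=
      HasDerivAt.comp_const_add x t (hu₀ (x + t)).hasDerivAt
    have hT : HasDerivAt (fun t' : ℝ => u t' x)
        ((e1 * (-((a:ℂ) * x)) * e2 + e1 * (e2 * (-((a:ℂ) * t)))) * u₀ (x + t)
          + e1 * e2 * deriv u₀ (x + t)) t := by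
      have := ((h1.mul h2).mul h3)
      simpa only [← hu t x] using (funext (fun t' => (hu t' x).symm) ▸ this)
    -- x-derivatives
    have g1 : HasDerivAt (fun x' : ℝ => Complex.exp (-((a:ℂ) * x' * t)))
        (e1 * (-((a:ℂ) * t))) x := by
      have hi : HasDerivAt (fun x' : ℝ => -((a:ℂ) * x' * t)) (-((a:ℂ) * t)) x := by
        have := ((hd x).const_mul ((a:ℂ) * t)).neg
        convert this using 1
        · rfl
        · funext s; simp; ring
        · ring
      simpa [he1, mul_comm] using hi.cexp
    have g3 : HasDerivAt (fun x' : ℝ => u₀ (x' + t)) (deriv u₀ (x + t)) x :=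
      HasDerivAt.comp_add_const x t (hu₀ (x + t)).hasDerivAt
    have hX : HasDerivAt (fun x' : ℝ => u t x')
        ((e1 * (-((a:ℂ) * t)) * e2) * u₀ (x + t) + e1 * e2 * deriv u₀ (x + t)) x := by
      have := ((g1.mul (hasDerivAt_const x e2)).mul g3)
      have h' : ((e1 * (-((a:ℂ) * t)) * e2 + (fun x' : ℝ =>
          Complex.exp (-((a:ℂ) * x' * t))) x * 0) * u₀ (x + t)
          + (fun x' : ℝ => Complex.exp (-((a:ℂ) * x' * t))) x * e2 * deriv u₀ (x + t))
          = ((e1 * (-((a:ℂ) * t)) * e2) * u₀ (x + t) + e1 * e2 * deriv u₀ (x + t)) := by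
        simp [he1]
      rw [← h']
      exact (funext (fun x' => (hu t x').symm) ▸ this)
    rw [hT.deriv, hX.deriv, hu t x]
    ring
  · intro x
    rw [hu]
    simp
end

section
/- Let a > 0. Define, for t > 0 and x, s ∈ ℝ, the kernel K_a(x,s,t) = √(a/π) · (e^{2at} − e^{-2at})^{-1/2} · exp( −a·(e^{at}x − e^{-at}s)² / (e^{2at} − e^{-2at}) + (a/2)·(x² − s²) ). Then for every fixed s ∈ ℝ, the function (t,x) ↦ K_a(x,s,t) satisfies the heat equation for the real harmonic oscillator: ∂K/∂t (x,s,t) = ∂²K/∂x² (x,s,t) − a²·x²·K(x,s,t) for all t > 0 and x ∈ ℝ. -/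
open Real

/-- The Mehler-type heat kernel of the real harmonic oscillator obtained via
the Bargmann transform. -/
noncomputable def mehlerKernel (a x s t : ℝ) : ℝ :=
  Real.sqrt (a / Real.pi) * (Real.sqrt (Real.exp (2 * a * t) - Real.exp (-(2 * a * t))))⁻¹ *
    Real.exp (-(a * (Real.exp (a * t) * x - Real.exp (-(a * t)) * s) ^ 2)
        / (Real.exp (2 * a * t) - Real.exp (-(2 * a * t)))
      + (a / 2) * (x ^ 2 - s ^ 2))

lemma mehler_aux1 (C p q r x : ℝ) :
    HasDerivAt (fun y : ℝ => C * Real.exp (p*y^2 + q*y + r))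
      (C * Real.exp (p*x^2 + q*x + r) * (2*p*x + q)) x := by
  have h : HasDerivAt (fun y : ℝ => p*y^2 + q*y + r) (2*p*x + q) x := by
    have h1 : HasDerivAt (fun y : ℝ => p*y^2) (p*(2*x)) x := by
      simpa using ((hasDerivAt_pow 2 x).const_mul p)
    have h12 := (h1.add ((hasDerivAt_id x).const_mul q)).add_const r
    simp only [id_eq, mul_one] at h12
    refine h12.congr_deriv ?_
    ring
  have h2 := h.exp.const_mul C
  refine h2.congr_deriv ?_
  ring

lemma mehler_aux2 (C p q r x : ℝ) :
    iteratedDeriv 2 (fun y : ℝ => C * Real.exp (p*y^2 + q*y + r)) x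
      = C * Real.exp (p*x^2 + q*x + r) * ((2*p*x + q)^2 + 2*p) := by
  have hd : deriv (fun y : ℝ => C * Real.exp (p*y^2+q*y+r))
      = fun y => C * Real.exp (p*y^2+q*y+r) * (2*p*y+q) :=
    funext fun y => (mehler_aux1 C p q r y).deriv
  have hlin : HasDerivAt (fun y : ℝ => 2*p*y+q) (2*p) x := by
    have := ((hasDerivAt_id x).const_mul (2*p)).add_const q
    simpa using this
  have h2 : HasDerivAt (fun y : ℝ => C * Real.exp (p*y^2+q*y+r) * (2*p*y+q))
      (C * Real.exp (p*x^2+q*x+r) * ((2*p*x+q)^2 + 2*p)) x := by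
    have := (mehler_aux1 C p q r x).mul hlin
    refine this.congr_deriv ?_
    ring
  rw [show (2:ℕ) = 1+1 from rfl, iteratedDeriv_succ, iteratedDeriv_one, hd, h2.deriv]

lemma mehler_aux3 (c k aa : ℝ) {E W : ℝ → ℝ} {eE eW : ℝ} {t : ℝ}
    (hE : HasDerivAt E eE t) (hW : HasDerivAt W eW t) (hEpos : 0 < E t) :
    HasDerivAt (fun t' => c * (Real.sqrt (E t'))⁻¹ * Real.exp (-(aa * W t' ^ 2) / E t' + k))
      (c * (Real.sqrt (E t))⁻¹ * Real.exp (-(aa * W t ^ 2) / E t + k) *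
        ((-(aa * (2 * W t * eW)) * E t - -(aa * W t ^ 2) * eE) / (E t) ^ 2 - eE / (2 * E t))) t := by
  have hEne : E t ≠ 0 := ne_of_gt hEpos
  have hSpos : 0 < Real.sqrt (E t) := Real.sqrt_pos.mpr hEpos
  have hSne : Real.sqrt (E t) ≠ 0 := ne_of_gt hSpos
  have hS2 : Real.sqrt (E t) ^ 2 = E t := Real.sq_sqrt hEpos.le
  have hsqrt : HasDerivAt (fun t' => Real.sqrt (E t')) (eE / (2 * Real.sqrt (E t))) t := by
    have h := (Real.hasDerivAt_sqrt hEne).comp t hE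
    refine h.congr_deriv ?_
    ring
  have hinv := (hsqrt.inv hSne).const_mul c
  have hN : HasDerivAt (fun t' => -(aa * W t' ^ 2)) (-(aa * (2 * W t * eW))) t := by
    have := ((hW.pow 2).const_mul aa).neg
    refine this.congr_deriv ?_
    push_cast
    ring
  have hG : HasDerivAt (fun t' => -(aa * W t' ^ 2) / E t' + k)
      ((-(aa * (2 * W t * eW)) * E t - -(aa * W t ^ 2) * eE) / (E t)^2) t :=
    (hN.div hE hEne).add_const k
  have h := hinv.mul hG.exp
  refine h.congr_deriv ?_
  simp only [Pi.inv_apply]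
  generalize hX : Real.exp (-(aa * W t ^ 2) / E t + k) = X
  generalize hSg : Real.sqrt (E t) = S at hS2 hSne ⊢
  rw [← hS2]
  field_simp
  ring

/-- For each fixed `s`, the kernel `K_a(x,s,t)` satisfies the heat equation for the
real harmonic oscillator `∂K/∂t = ∂²K/∂x² − a²x²K` for `t > 0`. -/
theorem mehlerKernel_heat (a : ℝ) (ha : 0 < a) (s : ℝ) :
    ∀ (t : ℝ), 0 < t → ∀ (x : ℝ),
      deriv (fun t' : ℝ => mehlerKernel a x s t') t =
        iteratedDeriv 2 (fun x' : ℝ => mehlerKernel a x' s t) x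
          - a ^ 2 * x ^ 2 * mehlerKernel a x s t := by
  intro t ht x
  have hE : (0:ℝ) < Real.exp (2*a*t) - Real.exp (-(2*a*t)) := by
    have h := Real.exp_lt_exp.mpr (show -(2*a*t) < 2*a*t by nlinarith)
    linarith
  have hEne : Real.exp (2*a*t) - Real.exp (-(2*a*t)) ≠ 0 := ne_of_gt hE
  have hSne : Real.sqrt (Real.exp (2*a*t) - Real.exp (-(2*a*t))) ≠ 0 :=
    ne_of_gt (Real.sqrt_pos.mpr hE)
  have hune : Real.exp (a*t) ≠ 0 := (Real.exp_pos _).ne'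
  have hA : Real.exp (2*a*t) = Real.exp (a*t)^2 := by
    rw [show (2:ℝ)*a*t = a*t + a*t by ring, Real.exp_add]; ring
  have hB : Real.exp (-(2*a*t)) = Real.exp (-(a*t))^2 := by
    rw [show -((2:ℝ)*a*t) = -(a*t) + -(a*t) by ring, Real.exp_add]; ring
  have hv : Real.exp (-(a*t)) = (Real.exp (a*t))⁻¹ := Real.exp_neg _
  set p := -(a * Real.exp (a*t)^2) / (Real.exp (2*a*t) - Real.exp (-(2*a*t))) + a/2 with hp
  set q := 2*a*Real.exp (a*t)*Real.exp (-(a*t))*s / (Real.exp (2*a*t) - Real.exp (-(2*a*t))) with hq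
  set r := -(a * Real.exp (-(a*t))^2 * s^2) / (Real.exp (2*a*t) - Real.exp (-(2*a*t))) - a/2*s^2 with hr
  set C := Real.sqrt (a/Real.pi) * (Real.sqrt (Real.exp (2*a*t) - Real.exp (-(2*a*t))))⁻¹ with hC
  have hexp : ∀ y : ℝ,
      -(a * (Real.exp (a*t) * y - Real.exp (-(a*t)) * s) ^ 2)
        / (Real.exp (2*a*t) - Real.exp (-(2*a*t))) + a/2 * (y^2 - s^2)
      = p*y^2 + q*y + r := by
    intro y
    rw [hp, hq, hr]
    field_simp
    ring
  have hK : ∀ y : ℝ, mehlerKernel a y s t = C * Real.exp (p*y^2 + q*y + r) := by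
    intro y
    simp only [mehlerKernel]
    rw [hexp y, hC]
  have hIter : iteratedDeriv 2 (fun x' : ℝ => mehlerKernel a x' s t) x
      = C * Real.exp (p*x^2+q*x+r) * ((2*p*x+q)^2 + 2*p) := by
    have hfun : (fun x' : ℝ => mehlerKernel a x' s t)
        = fun x' : ℝ => C * Real.exp (p*x'^2 + q*x' + r) := funext fun y => hK y
    rw [hfun, mehler_aux2]
  -- derivatives in t
  have hu' : HasDerivAt (fun t' : ℝ => Real.exp (a*t')) (a*Real.exp (a*t)) t := by
    have := ((hasDerivAt_id t).const_mul a).exp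
    simp only [id_eq, mul_one] at this
    refine this.congr_deriv ?_
    ring
  have hv' : HasDerivAt (fun t' : ℝ => Real.exp (-(a*t'))) (-(a*Real.exp (-(a*t)))) t := by
    have := (((hasDerivAt_id t).const_mul a).neg).exp
    simp only [id_eq, mul_one] at this
    refine this.congr_deriv ?_
    simp only [Pi.neg_apply]; ring
  have hE' : HasDerivAt (fun t' : ℝ => Real.exp (2*a*t') - Real.exp (-(2*a*t')))
      (2*a*Real.exp (2*a*t) + 2*a*Real.exp (-(2*a*t))) t := by
    have h1 := ((hasDerivAt_id t).const_mul (2*a)).exp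
    have h2 := (((hasDerivAt_id t).const_mul (2*a)).neg).exp
    have h := h1.sub h2
    simp only [id_eq, mul_one] at h
    refine h.congr_deriv ?_
    simp only [Pi.neg_apply]; ring
  have hw' : HasDerivAt (fun t' : ℝ => Real.exp (a*t')*x - Real.exp (-(a*t'))*s)
      (a*Real.exp (a*t)*x + a*Real.exp (-(a*t))*s) t := by
    have := (hu'.mul_const x).sub (hv'.mul_const s)
    refine this.congr_deriv ?_
    ring
  have hT := mehler_aux3 (Real.sqrt (a/Real.pi)) (a/2*(x^2-s^2)) a hE' hw' hE
  have hd : deriv (fun t' : ℝ => mehlerKernel a x s t') t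
      = Real.sqrt (a/Real.pi) * (Real.sqrt (Real.exp (2*a*t) - Real.exp (-(2*a*t))))⁻¹ *
          Real.exp (-(a * (Real.exp (a*t)*x - Real.exp (-(a*t))*s) ^ 2)
              / (Real.exp (2*a*t) - Real.exp (-(2*a*t))) + a/2*(x^2-s^2)) *
        ((-(a * (2 * (Real.exp (a*t)*x - Real.exp (-(a*t))*s)
              * (a*Real.exp (a*t)*x + a*Real.exp (-(a*t))*s)))
            * (Real.exp (2*a*t) - Real.exp (-(2*a*t)))
          - -(a * (Real.exp (a*t)*x - Real.exp (-(a*t))*s) ^ 2)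
            * (2*a*Real.exp (2*a*t) + 2*a*Real.exp (-(2*a*t))))
          / (Real.exp (2*a*t) - Real.exp (-(2*a*t))) ^ 2
        - (2*a*Real.exp (2*a*t) + 2*a*Real.exp (-(2*a*t)))
          / (2 * (Real.exp (2*a*t) - Real.exp (-(2*a*t))))) := by
    have heq : (fun t' : ℝ => mehlerKernel a x s t')
        = fun t' : ℝ => Real.sqrt (a/Real.pi)
            * (Real.sqrt (Real.exp (2*a*t') - Real.exp (-(2*a*t'))))⁻¹
            * Real.exp (-(a * (Real.exp (a*t')*x - Real.exp (-(a*t'))*s) ^ 2)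
                / (Real.exp (2*a*t') - Real.exp (-(2*a*t'))) + a/2*(x^2-s^2)) := by
      funext t'
      simp only [mehlerKernel]
    rw [heq]
    exact hT.deriv
  rw [hd, hIter, hK x, ← hexp x]
  simp only [hp, hq, hr, hC]
  generalize Real.exp (-(a * (Real.exp (a*t)*x - Real.exp (-(a*t))*s) ^ 2)
      / (Real.exp (2*a*t) - Real.exp (-(2*a*t))) + a/2*(x^2-s^2)) = X
  simp only [hA, hB] at hEne hSne ⊢
  field_simp
  ring
end

section
/- Let a > 0 and let y₀ ∈ L²(ℝ, ℂ). Define K_a(x,s,t) = √(a/π) · (e^{2at} − e^{-2at})^{-1/2} · exp( −a·(e^{at}x − e^{-at}s)² / (e^{2at} − e^{-2at}) + (a/2)·(x² − s²) ) and y(t,x) = ∫_ℝ K_a(x,s,t)·y₀(s) ds for t > 0, x ∈ ℝ. Then the integral defining y(t,x) converges for every t > 0 and x ∈ ℝ, and y satisfies the heat equation for the real harmonic oscillator: ∂y/∂t (t,x) = ∂²y/∂x² (t,x) − a²·x²·y(t,x) for all t > 0 and x ∈ ℝ. -/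
open Real MeasureTheory

noncomputable def mK1 (a x s t : ℝ) : ℝ :=
  (a * x - 2 * a * Real.exp (a * t) * (Real.exp (a * t) * x - Real.exp (-(a * t)) * s)
      / (Real.exp (2 * a * t) - Real.exp (-(2 * a * t)))) * mehlerKernel a x s t

noncomputable def mK2 (a x s t : ℝ) : ℝ :=
  ((a - 2 * a * Real.exp (a * t) ^ 2 / (Real.exp (2 * a * t) - Real.exp (-(2 * a * t))))
    + (a * x - 2 * a * Real.exp (a * t) * (Real.exp (a * t) * x - Real.exp (-(a * t)) * s)
      / (Real.exp (2 * a * t) - Real.exp (-(2 * a * t)))) ^ 2) * mehlerKernel a x s t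

noncomputable def mKt (a x s t : ℝ) : ℝ :=
  ( -(a * (Real.exp (2 * a * t) + Real.exp (-(2 * a * t))))
        / (Real.exp (2 * a * t) - Real.exp (-(2 * a * t)))
    - 2 * a ^ 2 * (Real.exp (a * t) * x - Real.exp (-(a * t)) * s)
        * (Real.exp (a * t) * x + Real.exp (-(a * t)) * s)
        / (Real.exp (2 * a * t) - Real.exp (-(2 * a * t)))
    + 2 * a ^ 2 * (Real.exp (a * t) * x - Real.exp (-(a * t)) * s) ^ 2
        * (Real.exp (2 * a * t) + Real.exp (-(2 * a * t)))
        / (Real.exp (2 * a * t) - Real.exp (-(2 * a * t))) ^ 2 ) * mehlerKernel a x s t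


set_option maxHeartbeats 1000000
open Filter Metric
open scoped ENNReal

lemma hasDerivAt_mehler_x (a s t x : ℝ) :
    HasDerivAt (fun x' => mehlerKernel a x' s t) (mK1 a x s t) x := by
  have h1 : HasDerivAt (fun x' : ℝ => Real.exp (a * t) * x' - Real.exp (-(a * t)) * s)
      (Real.exp (a * t)) x := by
    simpa using ((hasDerivAt_id x).const_mul (Real.exp (a * t))).sub_const
      (Real.exp (-(a * t)) * s)
  have h2 := ((h1.pow 2).const_mul a).neg.div_const
      (Real.exp (2 * a * t) - Real.exp (-(2 * a * t)))
  have h3 : HasDerivAt (fun x' : ℝ => (a / 2) * (x' ^ 2 - s ^ 2)) ((a / 2) * (2 * x)) x := by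
    exact ((hasDerivAt_pow 2 x).sub_const (s ^ 2)).const_mul (a / 2) |>.congr_deriv (by ring)
  have h4 := (h2.add h3).exp.const_mul
      (Real.sqrt (a / Real.pi) *
        (Real.sqrt (Real.exp (2 * a * t) - Real.exp (-(2 * a * t))))⁻¹)
  refine HasDerivAt.congr_deriv (f := fun x' => mehlerKernel a x' s t) h4 ?_
  simp only [mK1, mehlerKernel, Pi.add_apply, Pi.neg_apply, Pi.pow_apply, Nat.reduceSub, pow_one,
    Nat.cast_ofNat]
  ring

lemma hasDerivAt_mehler_xx (a s t x : ℝ) :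
    HasDerivAt (fun x' => mK1 a x' s t) (mK2 a x s t) x := by
  have hlin : HasDerivAt (fun x' : ℝ => a * x' - 2 * a * Real.exp (a * t) *
      (Real.exp (a * t) * x' - Real.exp (-(a * t)) * s)
      / (Real.exp (2 * a * t) - Real.exp (-(2 * a * t))))
      (a - 2 * a * Real.exp (a * t) ^ 2 / (Real.exp (2 * a * t) - Real.exp (-(2 * a * t)))) x := by
    have h1 : HasDerivAt (fun x' : ℝ => Real.exp (a * t) * x' - Real.exp (-(a * t)) * s)
        (Real.exp (a * t)) x := by
      simpa using ((hasDerivAt_id x).const_mul (Real.exp (a * t))).sub_const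
        (Real.exp (-(a * t)) * s)
    have := ((hasDerivAt_id x).const_mul a).sub
      ((h1.const_mul (2 * a * Real.exp (a * t))).div_const
        (Real.exp (2 * a * t) - Real.exp (-(2 * a * t))))
    exact this.congr_deriv (by ring)
  have := hlin.mul (hasDerivAt_mehler_x a s t x)
  refine this.congr_deriv ?_
  simp only [mK1, mK2]
  ring

lemma expD_pos {a t : ℝ} (ha : 0 < a) (ht : 0 < t) :
    0 < Real.exp (2 * a * t) - Real.exp (-(2 * a * t)) := by
  have : -(2 * a * t) < 2 * a * t := by nlinarith
  simpa using Real.exp_lt_exp.mpr this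

lemma hasDerivAt_mehler_t (a x s : ℝ) {t : ℝ} (ha : 0 < a) (ht : 0 < t) :
    HasDerivAt (fun t' => mehlerKernel a x s t') (mKt a x s t) t := by
  have hDpos := expD_pos ha ht
  have hSpos : 0 < Real.sqrt (Real.exp (2 * a * t) - Real.exp (-(2 * a * t))) :=
    Real.sqrt_pos.mpr hDpos
  have hat : HasDerivAt (fun t' : ℝ => a * t') a t := by
    simpa using (hasDerivAt_id t).const_mul a
  have h2at : HasDerivAt (fun t' : ℝ => 2 * a * t') (2 * a) t := by
    simpa using (hasDerivAt_id t).const_mul (2 * a)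
  have hE : HasDerivAt (fun t' : ℝ => Real.exp (a * t')) (Real.exp (a * t) * a) t := hat.exp
  have hF : HasDerivAt (fun t' : ℝ => Real.exp (-(a * t'))) (Real.exp (-(a * t)) * (-a)) t :=
    hat.neg.exp
  have hX2 : HasDerivAt (fun t' : ℝ => Real.exp (2 * a * t')) (Real.exp (2 * a * t) * (2 * a)) t :=
    h2at.exp
  have hX2' : HasDerivAt (fun t' : ℝ => Real.exp (-(2 * a * t')))
      (Real.exp (-(2 * a * t)) * (-(2 * a))) t := h2at.neg.exp
  have hD : HasDerivAt (fun t' : ℝ => Real.exp (2 * a * t') - Real.exp (-(2 * a * t')))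
      (Real.exp (2 * a * t) * (2 * a) - Real.exp (-(2 * a * t)) * (-(2 * a))) t := hX2.sub hX2'
  have hS : HasDerivAt (fun t' : ℝ => Real.sqrt (Real.exp (2 * a * t') - Real.exp (-(2 * a * t'))))
      ((Real.exp (2 * a * t) * (2 * a) - Real.exp (-(2 * a * t)) * (-(2 * a))) /
        (2 * Real.sqrt (Real.exp (2 * a * t) - Real.exp (-(2 * a * t))))) t := by
    have := (Real.hasDerivAt_sqrt hDpos.ne').comp t hD
    simpa [Function.comp_def, mul_comm, div_eq_mul_inv] using this
  have hSinv := hS.inv hSpos.ne'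
  have hu : HasDerivAt (fun t' : ℝ => Real.exp (a * t') * x - Real.exp (-(a * t')) * s)
      (Real.exp (a * t) * a * x - Real.exp (-(a * t)) * (-a) * s) t :=
    (hE.mul_const x).sub (hF.mul_const s)
  have hq := (((hu.pow 2).const_mul a).neg).div hD hDpos.ne'
  have hexp := (hq.add_const ((a / 2) * (x ^ 2 - s ^ 2))).exp
  have hfull := (hSinv.const_mul (Real.sqrt (a / Real.pi))).mul hexp
  have hfun : (fun t' => mehlerKernel a x s t') =
      fun t' => (Real.sqrt (a / Real.pi) *
        (Real.sqrt (Real.exp (2 * a * t') - Real.exp (-(2 * a * t'))))⁻¹) *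
        Real.exp (-(a * (Real.exp (a * t') * x - Real.exp (-(a * t')) * s) ^ 2)
          / (Real.exp (2 * a * t') - Real.exp (-(2 * a * t')))
          + (a / 2) * (x ^ 2 - s ^ 2)) := by
    funext t'; simp only [mehlerKernel]
  rw [hfun]
  refine hfull.congr_deriv ?_
  have hSD : Real.sqrt (Real.exp (2 * a * t) - Real.exp (-(2 * a * t))) ^ 2
      = Real.exp (2 * a * t) - Real.exp (-(2 * a * t)) := Real.sq_sqrt hDpos.le
  set S := Real.sqrt (Real.exp (2 * a * t) - Real.exp (-(2 * a * t))) with hSdef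
  simp only [mKt, mehlerKernel, Pi.add_apply, Pi.neg_apply, Pi.pow_apply, Pi.div_apply,
    Pi.inv_apply, Pi.mul_apply, Nat.reduceSub, pow_one, Nat.cast_ofNat]
  rw [← hSdef, ← hSD]
  have hSne := hSpos.ne'
  field_simp
  ring

lemma mehler_pde (a x s : ℝ) {t : ℝ} (ha : 0 < a) (ht : 0 < t) :
    mKt a x s t = mK2 a x s t - a ^ 2 * x ^ 2 * mehlerKernel a x s t := by
  have hDpos := expD_pos ha ht
  have hE2 : Real.exp (2 * a * t) = Real.exp (a * t) ^ 2 := by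
    rw [sq, ← Real.exp_add]; ring_nf
  have hF2 : Real.exp (-(2 * a * t)) = Real.exp (-(a * t)) ^ 2 := by
    rw [sq, ← Real.exp_add]; ring_nf
  have hEF : Real.exp (a * t) * Real.exp (-(a * t)) = 1 := by
    rw [← Real.exp_add]; simp
  rw [hE2, hF2] at hDpos
  simp only [mKt, mK2, mehlerKernel, hE2, hF2]
  field_simp
  ring_nf

lemma cont_bnd (c q p : ℝ) : Continuous (fun s : ℝ => c * Real.exp (q * |s| - p * s ^ 2)) := by
  fun_prop

lemma integrable_bnd (c q : ℝ) {p : ℝ} (hp : 0 < p) :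
    Integrable (fun s : ℝ => c * Real.exp (q * |s| - p * s ^ 2)) (volume : Measure ℝ) := by
  have hg : Integrable (fun s : ℝ => (|c| * Real.exp (q ^ 2 / (2 * p))) *
      Real.exp (-(p / 2) * s ^ 2)) (volume : Measure ℝ) :=
    (integrable_exp_neg_mul_sq (half_pos hp)).const_mul _
  refine hg.mono' ((cont_bnd c q p).aestronglyMeasurable) ?_
  filter_upwards with s
  have harg : q * |s| - p * s ^ 2 ≤ q ^ 2 / (2 * p) + (-(p / 2) * s ^ 2) := by
    have key : (q * |s| - p * s ^ 2) - (-(p / 2) * s ^ 2) ≤ q ^ 2 / (2 * p) := by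
      rw [le_div_iff₀ (by positivity), ← sq_abs s]
      nlinarith [sq_nonneg (q - p * |s|)]
    linarith
  calc ‖c * Real.exp (q * |s| - p * s ^ 2)‖ = |c| * Real.exp (q * |s| - p * s ^ 2) := by
        rw [norm_mul]; simp [Real.norm_eq_abs, Real.abs_exp]
    _ ≤ |c| * Real.exp (q ^ 2 / (2 * p) + (-(p / 2) * s ^ 2)) := by
        exact mul_le_mul_of_nonneg_left (Real.exp_le_exp.mpr harg) (abs_nonneg c)
    _ = |c| * Real.exp (q ^ 2 / (2 * p)) * Real.exp (-(p / 2) * s ^ 2) := by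
        rw [Real.exp_add]; ring

lemma memL2_bnd (c q : ℝ) {p : ℝ} (hp : 0 < p) :
    MemLp (fun s : ℝ => c * Real.exp (q * |s| - p * s ^ 2)) 2 (volume : Measure ℝ) := by
  rw [memLp_two_iff_integrable_sq ((cont_bnd c q p).aestronglyMeasurable)]
  have := integrable_bnd (c ^ 2) (2 * q) (by positivity : (0:ℝ) < 2 * p)
  refine this.congr (Eventually.of_forall fun s => ?_)
  show c ^ 2 * Real.exp (2 * q * |s| - 2 * p * s ^ 2) = (c * Real.exp (q * |s| - p * s ^ 2)) ^ 2
  rw [mul_pow, sq (Real.exp _), ← Real.exp_add]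
  ring_nf

lemma integrable_bnd_mul_norm (c q : ℝ) {p : ℝ} (hp : 0 < p) (y₀ : ℝ → ℂ)
    (hy₀ : MemLp y₀ 2 (volume : Measure ℝ)) :
    Integrable (fun s : ℝ => c * Real.exp (q * |s| - p * s ^ 2) * ‖y₀ s‖)
      (volume : Measure ℝ) := by
  have h := (hy₀.norm.smul (memL2_bnd c q hp) (r := 1))
  rw [memLp_one_iff_integrable] at h
  exact h.congr (Eventually.of_forall fun s => by simp [smul_eq_mul])

lemma integrable_coe_mul {g : ℝ → ℝ} (hg : MemLp g 2 (volume : Measure ℝ)) (y₀ : ℝ → ℂ)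
    (hy₀ : MemLp y₀ 2 (volume : Measure ℝ)) :
    Integrable (fun s : ℝ => (g s : ℂ) * y₀ s) (volume : Measure ℝ) := by
  have h := (hy₀.smul hg (r := 1))
  rw [memLp_one_iff_integrable] at h
  exact h.congr (Eventually.of_forall fun s => by
    simp [Pi.smul_apply, Complex.real_smul])

lemma cont_mehler_s (a x t : ℝ) : Continuous (fun s => mehlerKernel a x s t) := by
  unfold mehlerKernel; fun_prop

lemma cont_mK1_s (a x t : ℝ) : Continuous (fun s => mK1 a x s t) := by
  unfold mK1 mehlerKernel; fun_prop

lemma cont_mK2_s (a x t : ℝ) : Continuous (fun s => mK2 a x s t) := by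
  unfold mK2 mehlerKernel; fun_prop

lemma cont_mKt_s (a x t : ℝ) : Continuous (fun s => mKt a x s t) := by
  unfold mKt mehlerKernel; fun_prop

lemma mehler_nonneg (a x s t : ℝ) : 0 ≤ mehlerKernel a x s t := by
  unfold mehlerKernel; positivity

lemma expD_mono (a : ℝ) (ha : 0 < a) {t1 t2 : ℝ} (h : t1 ≤ t2) :
    Real.exp (2 * a * t1) - Real.exp (-(2 * a * t1))
      ≤ Real.exp (2 * a * t2) - Real.exp (-(2 * a * t2)) := by
  have h1 : Real.exp (2 * a * t1) ≤ Real.exp (2 * a * t2) :=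
    Real.exp_le_exp.mpr (by nlinarith)
  have h2 : Real.exp (-(2 * a * t2)) ≤ Real.exp (-(2 * a * t1)) :=
    Real.exp_le_exp.mpr (by nlinarith)
  linarith

lemma mehler_le {a tm t b x : ℝ} (ha : 0 < a) (htm : 0 < tm) (htt : tm ≤ t)
    (hxb : |x| ≤ b) (s : ℝ) :
    mehlerKernel a x s t ≤
      (Real.sqrt (a / Real.pi) *
        (Real.sqrt (Real.exp (2 * a * tm) - Real.exp (-(2 * a * tm))))⁻¹ *
        Real.exp (a / 2 * b ^ 2)) * Real.exp (0 * |s| - a / 2 * s ^ 2) := by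
  have hDm := expD_pos ha htm
  have hDt := expD_pos ha (lt_of_lt_of_le htm htt)
  have hmono := expD_mono a ha htt
  have h1 : (Real.sqrt (Real.exp (2 * a * t) - Real.exp (-(2 * a * t))))⁻¹
      ≤ (Real.sqrt (Real.exp (2 * a * tm) - Real.exp (-(2 * a * tm))))⁻¹ := by
    apply inv_anti₀ (Real.sqrt_pos.mpr hDm) (Real.sqrt_le_sqrt hmono)
  have h2 : -(a * (Real.exp (a * t) * x - Real.exp (-(a * t)) * s) ^ 2)
        / (Real.exp (2 * a * t) - Real.exp (-(2 * a * t)))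
      + (a / 2) * (x ^ 2 - s ^ 2) ≤ a / 2 * b ^ 2 + (0 * |s| - a / 2 * s ^ 2) := by
    have hq : 0 ≤ a * (Real.exp (a * t) * x - Real.exp (-(a * t)) * s) ^ 2
        / (Real.exp (2 * a * t) - Real.exp (-(2 * a * t))) := by positivity
    have hx2 : x ^ 2 ≤ b ^ 2 := by nlinarith [abs_nonneg x, sq_abs x]
    have : -(a * (Real.exp (a * t) * x - Real.exp (-(a * t)) * s) ^ 2)
        / (Real.exp (2 * a * t) - Real.exp (-(2 * a * t))) ≤ 0 := by
      rw [neg_div]; linarith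
    nlinarith
  calc mehlerKernel a x s t
      ≤ (Real.sqrt (a / Real.pi) *
          (Real.sqrt (Real.exp (2 * a * tm) - Real.exp (-(2 * a * tm))))⁻¹) *
          Real.exp (a / 2 * b ^ 2 + (0 * |s| - a / 2 * s ^ 2)) := by
        unfold mehlerKernel
        exact mul_le_mul (mul_le_mul_of_nonneg_left h1 (Real.sqrt_nonneg _))
          (Real.exp_le_exp.mpr h2) (Real.exp_pos _).le (by positivity)
    _ = _ := by rw [Real.exp_add]; ring

lemma poly2_le {c0 c1 c2 : ℝ} (h0 : 0 ≤ c0) (h1 : 0 ≤ c1) (h2 : 0 ≤ c2) (s : ℝ) :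
    c0 + c1 * |s| + c2 * s ^ 2 ≤ (c0 + c1 + c2) * Real.exp (2 * |s|) := by
  have hs : |s| ≤ Real.exp |s| := by linarith [Real.add_one_le_exp |s|]
  have key : Real.exp (2 * |s|) = Real.exp |s| * Real.exp |s| := by
    rw [← Real.exp_add]; ring_nf
  have e1 : 1 ≤ Real.exp (2 * |s|) := Real.one_le_exp (by positivity)
  have e2 : |s| ≤ Real.exp (2 * |s|) := by
    rw [key]; nlinarith [abs_nonneg s, Real.exp_pos |s|]
  have e3 : s ^ 2 ≤ Real.exp (2 * |s|) := by
    rw [key, ← sq_abs s, sq]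
    exact mul_self_le_mul_self (abs_nonneg s) hs
  nlinarith

lemma bound_combo {w k c0 c1 c2 Cb pa s : ℝ} (h0 : 0 ≤ c0) (h1 : 0 ≤ c1) (h2 : 0 ≤ c2)
    (hCb : 0 ≤ Cb) (hk0 : 0 ≤ k) (hk : k ≤ Cb * Real.exp (0 * |s| - pa * s ^ 2))
    (hw : |w| ≤ c0 + c1 * |s| + c2 * s ^ 2) :
    |w * k| ≤ ((c0 + c1 + c2) * Cb) * Real.exp (2 * |s| - pa * s ^ 2) := by
  have h3 := poly2_le h0 h1 h2 s
  calc |w * k| = |w| * k := by rw [abs_mul, abs_of_nonneg hk0]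
    _ ≤ (c0 + c1 * |s| + c2 * s ^ 2) * (Cb * Real.exp (0 * |s| - pa * s ^ 2)) :=
        mul_le_mul hw hk hk0 (by positivity)
    _ ≤ ((c0 + c1 + c2) * Real.exp (2 * |s|)) * (Cb * Real.exp (0 * |s| - pa * s ^ 2)) :=
        mul_le_mul_of_nonneg_right h3 (by positivity)
    _ = _ := by
        rw [show (2 * |s| - pa * s ^ 2) = (2 * |s|) + (0 * |s| - pa * s ^ 2) by ring,
          Real.exp_add]
        ring

lemma abs3 (p q r : ℝ) : |p - q + r| ≤ |p| + |q| + |r| :=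
  (abs_add_le _ _).trans (add_le_add_left (abs_sub _ _) _)

lemma mK1_prefactor_bound {a t b x : ℝ} (ha : 0 < a) (ht : 0 < t) (hxb : |x| ≤ b) (s : ℝ) :
    |a * x - 2 * a * Real.exp (a * t) * (Real.exp (a * t) * x - Real.exp (-(a * t)) * s)
        / (Real.exp (2 * a * t) - Real.exp (-(2 * a * t)))|
      ≤ (a * b + 2 * a * Real.exp (a * t) ^ 2 * b
            / (Real.exp (2 * a * t) - Real.exp (-(2 * a * t))))
        + (2 * a * Real.exp (a * t) * Real.exp (-(a * t))
            / (Real.exp (2 * a * t) - Real.exp (-(2 * a * t)))) * |s|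
        + 0 * s ^ 2 := by
  have hD := expD_pos ha ht
  set E := Real.exp (a * t)
  set F := Real.exp (-(a * t))
  set D := Real.exp (2 * a * t) - Real.exp (-(2 * a * t)) with hDdef
  have hE : 0 < E := Real.exp_pos _
  have hF : 0 < F := Real.exp_pos _
  have heq : a * x - 2 * a * E * (E * x - F * s) / D
      = a * x - (2 * a * E ^ 2 / D) * x + (2 * a * E * F / D) * s := by ring
  rw [heq]
  have e1 : |a * x| ≤ a * b := by
    rw [abs_mul, abs_of_nonneg ha.le]; exact mul_le_mul_of_nonneg_left hxb ha.le
  have e2 : |(2 * a * E ^ 2 / D) * x| ≤ 2 * a * E ^ 2 * b / D := by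
    rw [abs_mul, abs_of_nonneg (by positivity : (0:ℝ) ≤ 2 * a * E ^ 2 / D)]
    refine le_trans (mul_le_mul_of_nonneg_left hxb (by positivity)) (le_of_eq (by ring))
  have e3 : |(2 * a * E * F / D) * s| = (2 * a * E * F / D) * |s| := by
    rw [abs_mul, abs_of_nonneg (by positivity : (0:ℝ) ≤ 2 * a * E * F / D)]
  have := abs3 (a * x) ((2 * a * E ^ 2 / D) * x) ((2 * a * E * F / D) * s)
  rw [show a * x - (2 * a * E ^ 2 / D) * x + (2 * a * E * F / D) * s
    = a * x - (2 * a * E ^ 2 / D) * x + (2 * a * E * F / D) * s from rfl] at this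
  linarith [this, e1, e2, le_of_eq e3]

lemma mK2_prefactor_bound {a t b x : ℝ} (ha : 0 < a) (ht : 0 < t) (hxb : |x| ≤ b) (s : ℝ) :
    |(a - 2 * a * Real.exp (a * t) ^ 2 / (Real.exp (2 * a * t) - Real.exp (-(2 * a * t))))
      + (a * x - 2 * a * Real.exp (a * t) * (Real.exp (a * t) * x - Real.exp (-(a * t)) * s)
        / (Real.exp (2 * a * t) - Real.exp (-(2 * a * t)))) ^ 2|
      ≤ ((a + 2 * a * Real.exp (a * t) ^ 2 / (Real.exp (2 * a * t) - Real.exp (-(2 * a * t))))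
          + 2 * (a * b + 2 * a * Real.exp (a * t) ^ 2 * b
            / (Real.exp (2 * a * t) - Real.exp (-(2 * a * t)))) ^ 2)
        + 0 * |s|
        + (2 * (2 * a * Real.exp (a * t) * Real.exp (-(a * t))
            / (Real.exp (2 * a * t) - Real.exp (-(2 * a * t)))) ^ 2) * s ^ 2 := by
  have hD := expD_pos ha ht
  have h1 := mK1_prefactor_bound ha ht hxb s
  set E := Real.exp (a * t)
  set F := Real.exp (-(a * t))
  set D := Real.exp (2 * a * t) - Real.exp (-(2 * a * t)) with hDdef
  set W := a * x - 2 * a * E * (E * x - F * s) / D with hW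
  set c0 := a * b + 2 * a * E ^ 2 * b / D with hc0
  set c1 := 2 * a * E * F / D with hc1
  have hc0n : 0 ≤ c0 := by
    have hb : 0 ≤ b := le_trans (abs_nonneg x) hxb
    rw [hc0]; positivity
  have hc1n : 0 ≤ c1 := by rw [hc1]; positivity
  have ha1 : |a - 2 * a * E ^ 2 / D| ≤ a + 2 * a * E ^ 2 / D := by
    refine (abs_sub _ _).trans ?_
    rw [abs_of_nonneg ha.le, abs_of_nonneg (by positivity : (0:ℝ) ≤ 2 * a * E ^ 2 / D)]
  have hsq : W ^ 2 ≤ (c0 + c1 * |s| + 0 * s ^ 2) ^ 2 := by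
    rw [← sq_abs W]
    exact pow_le_pow_left₀ (abs_nonneg _) h1 2
  have habs : |(a - 2 * a * E ^ 2 / D) + W ^ 2| ≤ |a - 2 * a * E ^ 2 / D| + W ^ 2 :=
    (abs_add_le _ _).trans (by rw [abs_of_nonneg (sq_nonneg W)])
  have hx2 : (c0 + c1 * |s| + 0 * s ^ 2) ^ 2 ≤ 2 * c0 ^ 2 + 2 * c1 ^ 2 * s ^ 2 := by
    nlinarith [sq_nonneg (c0 - c1 * |s|), sq_abs s]
  clear_value W c0 c1
  linarith [habs, ha1, hsq, hx2]

lemma mKt_prefactor_bound {a t t' x : ℝ} (ha : 0 < a) (ht : 0 < t)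
    (h1 : t / 2 ≤ t') (h2 : t' ≤ 3 * t / 2) (s : ℝ) :
    |(-(a * (Real.exp (2 * a * t') + Real.exp (-(2 * a * t'))))
        / (Real.exp (2 * a * t') - Real.exp (-(2 * a * t')))
      - 2 * a ^ 2 * (Real.exp (a * t') * x - Real.exp (-(a * t')) * s)
          * (Real.exp (a * t') * x + Real.exp (-(a * t')) * s)
          / (Real.exp (2 * a * t') - Real.exp (-(2 * a * t')))
      + 2 * a ^ 2 * (Real.exp (a * t') * x - Real.exp (-(a * t')) * s) ^ 2
          * (Real.exp (2 * a * t') + Real.exp (-(2 * a * t')))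
          / (Real.exp (2 * a * t') - Real.exp (-(2 * a * t'))) ^ 2)|
      ≤ (a * (Real.exp (2 * a * (3 * t / 2)) + 1)
              / (Real.exp (2 * a * (t / 2)) - Real.exp (-(2 * a * (t / 2))))
          + (2 * a ^ 2 / (Real.exp (2 * a * (t / 2)) - Real.exp (-(2 * a * (t / 2))))
            + 2 * a ^ 2 * (Real.exp (2 * a * (3 * t / 2)) + 1)
              / (Real.exp (2 * a * (t / 2)) - Real.exp (-(2 * a * (t / 2)))) ^ 2)
            * (Real.exp (a * (3 * t / 2)) * |x|) ^ 2)
        + (2 * (2 * a ^ 2 / (Real.exp (2 * a * (t / 2)) - Real.exp (-(2 * a * (t / 2))))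
            + 2 * a ^ 2 * (Real.exp (2 * a * (3 * t / 2)) + 1)
              / (Real.exp (2 * a * (t / 2)) - Real.exp (-(2 * a * (t / 2)))) ^ 2)
            * (Real.exp (a * (3 * t / 2)) * |x|)) * |s|
        + (2 * a ^ 2 / (Real.exp (2 * a * (t / 2)) - Real.exp (-(2 * a * (t / 2))))
            + 2 * a ^ 2 * (Real.exp (2 * a * (3 * t / 2)) + 1)
              / (Real.exp (2 * a * (t / 2)) - Real.exp (-(2 * a * (t / 2)))) ^ 2) * s ^ 2
      := by
  have ht2 : (0:ℝ) < t / 2 := by linarith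
  have ht' : 0 < t' := by linarith
  have hDm := expD_pos ha ht2
  have hD' := expD_pos ha ht'
  have hDge := expD_mono a ha h1
  set Dm := Real.exp (2 * a * (t / 2)) - Real.exp (-(2 * a * (t / 2))) with hDmdef
  set D := Real.exp (2 * a * t') - Real.exp (-(2 * a * t')) with hDdef
  set E := Real.exp (a * t') with hEdef
  set F := Real.exp (-(a * t')) with hFdef
  set X2 := Real.exp (2 * a * t') with hX2def
  set X2' := Real.exp (-(2 * a * t')) with hX2'def
  set M := Real.exp (2 * a * (3 * t / 2)) + 1 with hMdef
  set A := Real.exp (a * (3 * t / 2)) * |x| with hAdef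
  set B := 2 * a ^ 2 / Dm + 2 * a ^ 2 * M / Dm ^ 2 with hBdef
  have hEpos : 0 < E := Real.exp_pos _
  have hFpos : 0 < F := Real.exp_pos _
  have hX2b : X2 ≤ Real.exp (2 * a * (3 * t / 2)) := Real.exp_le_exp.mpr (by nlinarith)
  have hX2'b : X2' ≤ 1 := Real.exp_le_one_iff.mpr (by nlinarith)
  have hMb : X2 + X2' ≤ M := by rw [hMdef]; linarith
  have hMpos : 0 < X2 + X2' := by positivity
  have hEb : E ≤ Real.exp (a * (3 * t / 2)) := Real.exp_le_exp.mpr (by nlinarith)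
  have hFb : F ≤ 1 := Real.exp_le_one_iff.mpr (by nlinarith)
  have hA0 : 0 ≤ A := by rw [hAdef]; positivity
  have hu : |E * x - F * s| ≤ A + |s| := by
    refine (abs_sub _ _).trans ?_
    rw [abs_mul, abs_mul, abs_of_nonneg hEpos.le, abs_of_nonneg hFpos.le, hAdef]
    have b1 : E * |x| ≤ Real.exp (a * (3 * t / 2)) * |x| :=
      mul_le_mul_of_nonneg_right hEb (abs_nonneg x)
    have b2 : F * |s| ≤ 1 * |s| := mul_le_mul_of_nonneg_right hFb (abs_nonneg s)
    linarith
  have hv : |E * x + F * s| ≤ A + |s| := by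
    refine (abs_add_le _ _).trans ?_
    rw [abs_mul, abs_mul, abs_of_nonneg hEpos.le, abs_of_nonneg hFpos.le, hAdef]
    have b1 : E * |x| ≤ Real.exp (a * (3 * t / 2)) * |x| :=
      mul_le_mul_of_nonneg_right hEb (abs_nonneg x)
    have b2 : F * |s| ≤ 1 * |s| := mul_le_mul_of_nonneg_right hFb (abs_nonneg s)
    linarith
  have t1 : |(-(a * (X2 + X2'))) / D| ≤ a * M / Dm := by
    rw [abs_div, abs_neg, abs_of_nonneg (by positivity : (0:ℝ) ≤ a * (X2 + X2')),
      abs_of_nonneg hD'.le]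
    exact div_le_div₀ (by positivity) (by nlinarith) hDm hDge
  have t2 : |2 * a ^ 2 * (E * x - F * s) * (E * x + F * s) / D|
      ≤ 2 * a ^ 2 * (A + |s|) ^ 2 / Dm := by
    rw [abs_div, abs_of_nonneg hD'.le]
    refine div_le_div₀ (by positivity) ?_ hDm hDge
    have : |2 * a ^ 2 * (E * x - F * s) * (E * x + F * s)|
        = 2 * a ^ 2 * (|E * x - F * s| * |E * x + F * s|) := by
      rw [abs_mul, abs_mul, abs_of_nonneg (by positivity : (0:ℝ) ≤ 2 * a ^ 2)]; ring
    rw [this, sq]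
    have hprod : |E * x - F * s| * |E * x + F * s| ≤ (A + |s|) * (A + |s|) :=
      mul_le_mul hu hv (abs_nonneg _) (by positivity)
    nlinarith
  have t3 : |2 * a ^ 2 * (E * x - F * s) ^ 2 * (X2 + X2') / D ^ 2|
      ≤ 2 * a ^ 2 * (A + |s|) ^ 2 * M / Dm ^ 2 := by
    rw [abs_div, abs_of_nonneg (by positivity : (0:ℝ) ≤ D ^ 2)]
    refine div_le_div₀ (by positivity) ?_ (by positivity) (by nlinarith)
    have husq : (E * x - F * s) ^ 2 ≤ (A + |s|) ^ 2 := by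
      rw [← sq_abs (E * x - F * s)]
      exact pow_le_pow_left₀ (abs_nonneg _) hu 2
    rw [abs_of_nonneg (by positivity : (0:ℝ) ≤ 2 * a ^ 2 * (E * x - F * s) ^ 2 * (X2 + X2'))]
    have hmm := mul_le_mul husq hMb hMpos.le (sq_nonneg (A + |s|))
    nlinarith [hmm, sq_nonneg a]
  refine le_trans (abs3 _ _ _) ?_
  have expand : a * M / Dm + 2 * a ^ 2 * (A + |s|) ^ 2 / Dm
      + 2 * a ^ 2 * (A + |s|) ^ 2 * M / Dm ^ 2
      = (a * M / Dm + B * A ^ 2) + (2 * B * A) * |s| + B * s ^ 2 := by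
    rw [hBdef, ← sq_abs s]; ring
  linarith [t1, t2, t3, le_of_eq expand]

section Keys
variable {a t : ℝ} (y₀ : ℝ → ℂ)

lemma memL2_mehler (ha : 0 < a) (ht : 0 < t) (x : ℝ) :
    MemLp (fun s => mehlerKernel a x s t) 2 (volume : Measure ℝ) := by
  refine MemLp.of_le
    (memL2_bnd (Real.sqrt (a / Real.pi) *
        (Real.sqrt (Real.exp (2 * a * t) - Real.exp (-(2 * a * t))))⁻¹ *
        Real.exp (a / 2 * |x| ^ 2)) 0 (half_pos ha))
    (cont_mehler_s a x t).aestronglyMeasurable ?_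
  filter_upwards with s
  have hb := mehler_le ha ht le_rfl (le_refl |x|) s
  have hDpos := expD_pos ha ht
  rw [Real.norm_eq_abs, Real.norm_eq_abs, abs_of_nonneg (mehler_nonneg a x s t),
    abs_of_nonneg (by positivity)]
  exact hb

lemma key_int (ha : 0 < a) (ht : 0 < t)
    (hy₀ : MemLp y₀ 2 (volume : Measure ℝ)) (x : ℝ) :
    Integrable (fun s : ℝ => (mehlerKernel a x s t : ℂ) * y₀ s) (volume : Measure ℝ) :=
  integrable_coe_mul (memL2_mehler ha ht x) y₀ hy₀

lemma key_x (ha : 0 < a) (ht : 0 < t)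
    (hy₀ : MemLp y₀ 2 (volume : Measure ℝ)) (x₀ : ℝ) :
    Integrable (fun s : ℝ => (mK1 a x₀ s t : ℂ) * y₀ s) (volume : Measure ℝ) ∧
    HasDerivAt (fun x' => ∫ s : ℝ, (mehlerKernel a x' s t : ℂ) * y₀ s)
      (∫ s : ℝ, (mK1 a x₀ s t : ℂ) * y₀ s) x₀ := by
  have hDpos := expD_pos ha ht
  set b := |x₀| + 1 with hb
  set Cb := Real.sqrt (a / Real.pi) *
      (Real.sqrt (Real.exp (2 * a * t) - Real.exp (-(2 * a * t))))⁻¹ *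
      Real.exp (a / 2 * b ^ 2) with hCb
  set c0 := a * b + 2 * a * Real.exp (a * t) ^ 2 * b
      / (Real.exp (2 * a * t) - Real.exp (-(2 * a * t))) with hc0
  set c1 := 2 * a * Real.exp (a * t) * Real.exp (-(a * t))
      / (Real.exp (2 * a * t) - Real.exp (-(2 * a * t))) with hc1
  have hbn : (0:ℝ) ≤ b := by positivity
  have h := hasDerivAt_integral_of_dominated_loc_of_deriv_le (μ := (volume : Measure ℝ))
    (F := fun x' s => (mehlerKernel a x' s t : ℂ) * y₀ s)
    (F' := fun x' s => (mK1 a x' s t : ℂ) * y₀ s)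
    (bound := fun s => ((c0 + c1 + 0) * Cb) * Real.exp (2 * |s| - a / 2 * s ^ 2) * ‖y₀ s‖)
    (Metric.ball_mem_nhds x₀ one_pos)
    (Eventually.of_forall fun x' =>
      ((Complex.continuous_ofReal.comp (cont_mehler_s a x' t)).aestronglyMeasurable.mul hy₀.1))
    (key_int y₀ ha ht hy₀ x₀)
    ((Complex.continuous_ofReal.comp (cont_mK1_s a x₀ t)).aestronglyMeasurable.mul hy₀.1)
    ?_ (integrable_bnd_mul_norm ((c0 + c1 + 0) * Cb) 2 (half_pos ha) y₀ hy₀)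
    (Eventually.of_forall fun s x' _ =>
      ((hasDerivAt_mehler_x a s t x').ofReal_comp).mul_const (y₀ s))
  · exact h
  · filter_upwards with s
    intro x' hx'
    have hx'b : |x'| ≤ b := by
      have h1 : |x' - x₀| < 1 := by rwa [Metric.mem_ball, Real.dist_eq] at hx'
      have h2 := abs_sub_abs_le_abs_sub x' x₀
      rw [hb]; linarith
    rw [norm_mul, Complex.norm_real, Real.norm_eq_abs]
    refine mul_le_mul_of_nonneg_right ?_ (norm_nonneg _)
    show |mK1 a x' s t| ≤ _
    rw [mK1]
    exact bound_combo (by positivity) (by positivity) le_rfl (by positivity)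
      (mehler_nonneg a x' s t) (mehler_le ha ht le_rfl hx'b s)
      (mK1_prefactor_bound ha ht hx'b s)

lemma key_xx (ha : 0 < a) (ht : 0 < t)
    (hy₀ : MemLp y₀ 2 (volume : Measure ℝ)) (x₀ : ℝ) :
    Integrable (fun s : ℝ => (mK2 a x₀ s t : ℂ) * y₀ s) (volume : Measure ℝ) ∧
    HasDerivAt (fun x' => ∫ s : ℝ, (mK1 a x' s t : ℂ) * y₀ s)
      (∫ s : ℝ, (mK2 a x₀ s t : ℂ) * y₀ s) x₀ := by
  have hDpos := expD_pos ha ht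
  set b := |x₀| + 1 with hb
  set Cb := Real.sqrt (a / Real.pi) *
      (Real.sqrt (Real.exp (2 * a * t) - Real.exp (-(2 * a * t))))⁻¹ *
      Real.exp (a / 2 * b ^ 2) with hCb
  set c0 := (a + 2 * a * Real.exp (a * t) ^ 2 / (Real.exp (2 * a * t) - Real.exp (-(2 * a * t))))
          + 2 * (a * b + 2 * a * Real.exp (a * t) ^ 2 * b
            / (Real.exp (2 * a * t) - Real.exp (-(2 * a * t)))) ^ 2 with hc0
  set c2 := 2 * (2 * a * Real.exp (a * t) * Real.exp (-(a * t))
            / (Real.exp (2 * a * t) - Real.exp (-(2 * a * t)))) ^ 2 with hc2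
  have hbn : (0:ℝ) ≤ b := by positivity
  have h := hasDerivAt_integral_of_dominated_loc_of_deriv_le (μ := (volume : Measure ℝ))
    (F := fun x' s => (mK1 a x' s t : ℂ) * y₀ s)
    (F' := fun x' s => (mK2 a x' s t : ℂ) * y₀ s)
    (bound := fun s => ((c0 + 0 + c2) * Cb) * Real.exp (2 * |s| - a / 2 * s ^ 2) * ‖y₀ s‖)
    (Metric.ball_mem_nhds x₀ one_pos)
    (Eventually.of_forall fun x' =>
      ((Complex.continuous_ofReal.comp (cont_mK1_s a x' t)).aestronglyMeasurable.mul hy₀.1))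
    ((key_x y₀ ha ht hy₀ x₀).1)
    ((Complex.continuous_ofReal.comp (cont_mK2_s a x₀ t)).aestronglyMeasurable.mul hy₀.1)
    ?_ (integrable_bnd_mul_norm ((c0 + 0 + c2) * Cb) 2 (half_pos ha) y₀ hy₀)
    (Eventually.of_forall fun s x' _ =>
      ((hasDerivAt_mehler_xx a s t x').ofReal_comp).mul_const (y₀ s))
  · exact h
  · filter_upwards with s
    intro x' hx'
    have hx'b : |x'| ≤ b := by
      have h1 : |x' - x₀| < 1 := by rwa [Metric.mem_ball, Real.dist_eq] at hx'
      have h2 := abs_sub_abs_le_abs_sub x' x₀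
      rw [hb]; linarith
    rw [norm_mul, Complex.norm_real, Real.norm_eq_abs]
    refine mul_le_mul_of_nonneg_right ?_ (norm_nonneg _)
    show |mK2 a x' s t| ≤ _
    rw [mK2]
    exact bound_combo (by positivity) le_rfl (by positivity) (by positivity)
      (mehler_nonneg a x' s t) (mehler_le ha ht le_rfl hx'b s)
      (mK2_prefactor_bound ha ht hx'b s)

lemma key_t (ha : 0 < a) (ht : 0 < t)
    (hy₀ : MemLp y₀ 2 (volume : Measure ℝ)) (x : ℝ) :
    HasDerivAt (fun t' => ∫ s : ℝ, (mehlerKernel a x s t' : ℂ) * y₀ s)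
      (∫ s : ℝ, (mKt a x s t : ℂ) * y₀ s) t := by
  have ht2 : (0:ℝ) < t / 2 := by linarith
  set Ct := Real.sqrt (a / Real.pi) *
      (Real.sqrt (Real.exp (2 * a * (t / 2)) - Real.exp (-(2 * a * (t / 2)))))⁻¹ *
      Real.exp (a / 2 * |x| ^ 2) with hCt
  set d0 := a * (Real.exp (2 * a * (3 * t / 2)) + 1)
              / (Real.exp (2 * a * (t / 2)) - Real.exp (-(2 * a * (t / 2))))
          + (2 * a ^ 2 / (Real.exp (2 * a * (t / 2)) - Real.exp (-(2 * a * (t / 2))))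
            + 2 * a ^ 2 * (Real.exp (2 * a * (3 * t / 2)) + 1)
              / (Real.exp (2 * a * (t / 2)) - Real.exp (-(2 * a * (t / 2)))) ^ 2)
            * (Real.exp (a * (3 * t / 2)) * |x|) ^ 2 with hd0
  set d1 := 2 * (2 * a ^ 2 / (Real.exp (2 * a * (t / 2)) - Real.exp (-(2 * a * (t / 2))))
            + 2 * a ^ 2 * (Real.exp (2 * a * (3 * t / 2)) + 1)
              / (Real.exp (2 * a * (t / 2)) - Real.exp (-(2 * a * (t / 2)))) ^ 2)
            * (Real.exp (a * (3 * t / 2)) * |x|) with hd1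
  set d2 := 2 * a ^ 2 / (Real.exp (2 * a * (t / 2)) - Real.exp (-(2 * a * (t / 2))))
            + 2 * a ^ 2 * (Real.exp (2 * a * (3 * t / 2)) + 1)
              / (Real.exp (2 * a * (t / 2)) - Real.exp (-(2 * a * (t / 2)))) ^ 2 with hd2
  have hDm := expD_pos ha ht2
  have h := hasDerivAt_integral_of_dominated_loc_of_deriv_le (μ := (volume : Measure ℝ))
    (F := fun t' s => (mehlerKernel a x s t' : ℂ) * y₀ s)
    (F' := fun t' s => (mKt a x s t' : ℂ) * y₀ s)
    (bound := fun s => ((d0 + d1 + d2) * Ct) * Real.exp (2 * |s| - a / 2 * s ^ 2) * ‖y₀ s‖)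
    (Metric.ball_mem_nhds t ht2)
    (Eventually.of_forall fun t' =>
      ((Complex.continuous_ofReal.comp (cont_mehler_s a x t')).aestronglyMeasurable.mul hy₀.1))
    (key_int y₀ ha ht hy₀ x)
    ((Complex.continuous_ofReal.comp (cont_mKt_s a x t)).aestronglyMeasurable.mul hy₀.1)
    ?_ (integrable_bnd_mul_norm ((d0 + d1 + d2) * Ct) 2 (half_pos ha) y₀ hy₀)
    ?_
  · exact h.2
  · filter_upwards with s
    intro t' ht'
    have h1 : |t' - t| < t / 2 := by rwa [Metric.mem_ball, Real.dist_eq] at ht'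
    have hl : t / 2 ≤ t' := by cases abs_lt.mp h1; linarith
    have hr : t' ≤ 3 * t / 2 := by cases abs_lt.mp h1; linarith
    rw [norm_mul, Complex.norm_real, Real.norm_eq_abs]
    refine mul_le_mul_of_nonneg_right ?_ (norm_nonneg _)
    show |mKt a x s t'| ≤ _
    rw [mKt]
    exact bound_combo (by positivity) (by positivity) (by positivity) (by positivity)
      (mehler_nonneg a x s t') (mehler_le ha ht2 hl (le_refl |x|) s)
      (mKt_prefactor_bound ha ht hl hr s)
  · filter_upwards with s
    intro t' ht'
    have h1 : |t' - t| < t / 2 := by rwa [Metric.mem_ball, Real.dist_eq] at ht'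
    have hl : 0 < t' := by cases abs_lt.mp h1; linarith
    exact ((hasDerivAt_mehler_t a x s ha hl).ofReal_comp).mul_const (y₀ s)

end Keys

/-- For `y₀ ∈ L²(ℝ,ℂ)`, the function `y(t,x) = ∫ K_a(x,s,t) y₀(s) ds` is well defined
(the integral converges) and solves the heat equation for the real harmonic
oscillator `∂y/∂t = ∂²y/∂x² − a²x²y` for `t > 0`. -/
theorem harmonic_oscillator_heat_solution (a : ℝ) (ha : 0 < a) (y₀ : ℝ → ℂ)
    (hy₀ : MeasureTheory.MemLp y₀ 2 (volume : Measure ℝ))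
    (y : ℝ → ℝ → ℂ)
    (hy : ∀ t x, y t x = ∫ s : ℝ, (mehlerKernel a x s t : ℂ) * y₀ s) :
    (∀ (t : ℝ), 0 < t → ∀ (x : ℝ),
        MeasureTheory.Integrable (fun s : ℝ => (mehlerKernel a x s t : ℂ) * y₀ s)
          (volume : Measure ℝ)) ∧
    (∀ (t : ℝ), 0 < t → ∀ (x : ℝ),
        deriv (fun t' : ℝ => y t' x) t =
          iteratedDeriv 2 (fun x' : ℝ => y t x') x
            - (a : ℂ) ^ 2 * (x : ℂ) ^ 2 * y t x) := by
  constructor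
  · exact fun t ht x => key_int y₀ ha ht hy₀ x
  · intro t ht x
    -- time derivative
    have hfunt : (fun t' : ℝ => y t' x)
        = fun t' => ∫ s : ℝ, (mehlerKernel a x s t' : ℂ) * y₀ s :=
      funext fun t' => hy t' x
    have hT : deriv (fun t' : ℝ => y t' x) t = ∫ s : ℝ, (mKt a x s t : ℂ) * y₀ s := by
      rw [hfunt]; exact (key_t y₀ ha ht hy₀ x).deriv
    -- space derivatives
    have hfunx : (fun x' : ℝ => y t x')
        = fun x' => ∫ s : ℝ, (mehlerKernel a x' s t : ℂ) * y₀ s :=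
      funext fun x' => hy t x'
    have hderiv1 : deriv (fun x' : ℝ => y t x')
        = fun x' => ∫ s : ℝ, (mK1 a x' s t : ℂ) * y₀ s := by
      funext x'
      rw [hfunx]
      exact (key_x y₀ ha ht hy₀ x').2.deriv
    have hX2 : iteratedDeriv 2 (fun x' : ℝ => y t x') x
        = ∫ s : ℝ, (mK2 a x s t : ℂ) * y₀ s := by
      rw [iteratedDeriv_succ, iteratedDeriv_one, hderiv1]
      exact (key_xx y₀ ha ht hy₀ x).2.deriv
    -- pointwise identity and integral arithmetic
    have hpt : ∀ s : ℝ, (mKt a x s t : ℂ) * y₀ s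
        = (mK2 a x s t : ℂ) * y₀ s
          - (a : ℂ) ^ 2 * (x : ℂ) ^ 2 * ((mehlerKernel a x s t : ℂ) * y₀ s) := by
      intro s
      rw [mehler_pde a x s ha ht]
      push_cast
      ring
    rw [hT, hX2, hy t x]
    calc (∫ s : ℝ, (mKt a x s t : ℂ) * y₀ s)
        = ∫ s : ℝ, ((mK2 a x s t : ℂ) * y₀ s
            - (a : ℂ) ^ 2 * (x : ℂ) ^ 2 * ((mehlerKernel a x s t : ℂ) * y₀ s)) := by
          exact congrArg _ (funext hpt)
      _ = (∫ s : ℝ, (mK2 a x s t : ℂ) * y₀ s)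
            - ∫ s : ℝ, (a : ℂ) ^ 2 * (x : ℂ) ^ 2 * ((mehlerKernel a x s t : ℂ) * y₀ s) :=
          integral_sub (key_xx y₀ ha ht hy₀ x).1
            (((key_int y₀ ha ht hy₀ x)).const_mul ((a : ℂ) ^ 2 * (x : ℂ) ^ 2))
      _ = (∫ s : ℝ, (mK2 a x s t : ℂ) * y₀ s)
            - (a : ℂ) ^ 2 * (x : ℂ) ^ 2 * ∫ s : ℝ, (mehlerKernel a x s t : ℂ) * y₀ s := by
          rw [MeasureTheory.integral_const_mul]
end

section
/- Let a > 0, t > 0 and x, s ∈ ℝ. Then √(a/π) · (e^{2at} − e^{-2at})^{-1/2} · exp( −a·(e^{at}x − e^{-at}s)² / (e^{2at} − e^{-2at}) + (a/2)·(x² − s²) ) = √( a / (2π·sinh(2at)) ) · exp( −(a/2)·(x² + s²)·coth(2at) + a·x·s / sinh(2at) ); that is, the heat kernel for the real harmonic oscillator obtained via the Bargmann transform coincides with the classical Mehler kernel. -/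
open Real

/-- The heat kernel of the real harmonic oscillator produced by the Bargmann-transform
method coincides with the classical Mehler kernel: for `a > 0` and `t > 0`,
`√(a/π) (e^{2at}−e^{-2at})^{-1/2} exp(−a(e^{at}x−e^{-at}s)²/(e^{2at}−e^{-2at}) + (a/2)(x²−s²))
 = √(a/(2π sinh 2at)) exp(−(a/2)(x²+s²) coth(2at) + axs / sinh(2at))`. -/
theorem mehlerKernel_eq_classical (a t x s : ℝ) (ha : 0 < a) (ht : 0 < t) :
    Real.sqrt (a / Real.pi) *
        (Real.sqrt (Real.exp (2 * a * t) - Real.exp (-(2 * a * t))))⁻¹ *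
        Real.exp (-(a * (Real.exp (a * t) * x - Real.exp (-(a * t)) * s) ^ 2)
            / (Real.exp (2 * a * t) - Real.exp (-(2 * a * t)))
          + (a / 2) * (x ^ 2 - s ^ 2)) =
      Real.sqrt (a / (2 * Real.pi * Real.sinh (2 * a * t))) *
        Real.exp (-(a / 2) * (x ^ 2 + s ^ 2) * (Real.cosh (2 * a * t) / Real.sinh (2 * a * t))
          + a * x * s / Real.sinh (2 * a * t)) := by
  have hu : 0 < 2 * a * t := by positivity
  have hs : 0 < Real.sinh (2 * a * t) := Real.sinh_pos_iff.mpr hu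
  have hdiff : Real.exp (2 * a * t) - Real.exp (-(2 * a * t)) = 2 * Real.sinh (2 * a * t) := by
    rw [Real.sinh_eq]; ring
  have hEE : Real.exp (a * t) * Real.exp (a * t) =
      Real.cosh (2 * a * t) + Real.sinh (2 * a * t) := by
    rw [← Real.exp_add, Real.cosh_eq, Real.sinh_eq]; ring_nf
  have hFF : Real.exp (-(a * t)) * Real.exp (-(a * t)) =
      Real.cosh (2 * a * t) - Real.sinh (2 * a * t) := by
    rw [← Real.exp_add, Real.cosh_eq, Real.sinh_eq]; ring_nf
  have hEF : Real.exp (a * t) * Real.exp (-(a * t)) = 1 := by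
    rw [← Real.exp_add]; simp
  have hpre : Real.sqrt (a / Real.pi) *
      (Real.sqrt (Real.exp (2 * a * t) - Real.exp (-(2 * a * t))))⁻¹ =
      Real.sqrt (a / (2 * Real.pi * Real.sinh (2 * a * t))) := by
    rw [hdiff, ← Real.sqrt_inv, ← Real.sqrt_mul (by positivity)]
    congr 1
    rw [← div_eq_mul_inv, div_div]
    ring_nf
  rw [hpre]
  congr 1
  have hexp : (Real.exp (a * t) * x - Real.exp (-(a * t)) * s) ^ 2 =
      (Real.cosh (2 * a * t) + Real.sinh (2 * a * t)) * x ^ 2 - 2 * x * s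
        + (Real.cosh (2 * a * t) - Real.sinh (2 * a * t)) * s ^ 2 := by
    linear_combination x ^ 2 * hEE + s ^ 2 * hFF - 2 * x * s * hEF
  have h1 : Real.exp (2 * a * t) = Real.cosh (2 * a * t) + Real.sinh (2 * a * t) := by
    rw [Real.cosh_eq, Real.sinh_eq]; ring
  have h2 : Real.exp (-(2 * a * t)) = Real.cosh (2 * a * t) - Real.sinh (2 * a * t) := by
    rw [Real.cosh_eq, Real.sinh_eq]; ring
  rw [hdiff, hexp, Real.exp_eq_exp]
  field_simp
  ring
end
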